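/- arXiv:2304.04288 — 3 statements merged into one kernel-verified Lean document; each statement's English description precedes it below -/
import Mathlib

section
/- Let n ≥ 3 and let Dic_{4n} = ⟨a, x : a^{2n} = e, x² = aⁿ, ax = xa⁻¹⟩ be the dicyclic group of order 4n. Then the enhanced power graph of Dic_{4n} has exactly two dominating vertices, namely e and aⁿ. -/
open Polynomial

/-- The enhanced power graph of a group `G`: distinct `a`, `b` are adjacent iff
they lie in a common cyclic subgroup. -/
def enhancedPowerGraph (G : Type*) [Group G] : SimpleGraph G where
  Adj a b := a ≠ b ∧ ∃ c : G, a ∈ Subgroup.zpowers c ∧ b ∈ Subgroup.zpowers c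
  symm := by constructor; rintro a b ⟨h, c, ha, hb⟩; exact ⟨h.symm, c, hb, ha⟩
  loopless := by constructor; rintro a ⟨h, _⟩; exact h rfl

/-- The power graph of a group `G`: distinct `a`, `b` are adjacent iff
one is a power of the other. -/
def powerGraph (G : Type*) [Group G] : SimpleGraph G where
  Adj a b := a ≠ b ∧ (a ∈ Subgroup.zpowers b ∨ b ∈ Subgroup.zpowers a)
  symm := by constructor; rintro a b ⟨h, hc⟩; exact ⟨h.symm, hc.symm⟩
  loopless := by constructor; rintro a ⟨h, _⟩; exact h rfl

/-- The distance matrix of a graph, with real entries. -/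
noncomputable def distMatrix {V : Type*} (Γ : SimpleGraph V) : Matrix V V ℝ :=
  fun u v => (Γ.dist u v : ℝ)

/-- The elementary abelian group `El(p^n) = (ℤ/p)^n`, written multiplicatively. -/
abbrev El (p n : ℕ) : Type := Multiplicative (Fin n → ZMod p)

namespace QuaternionGroup

lemma mem_zpowers_xa {n : ℕ} [NeZero n] {k : ZMod (2 * n)} {y : QuaternionGroup n}
    (h : y ∈ Subgroup.zpowers (xa k)) :
    y = 1 ∨ y = xa k ∨ y = a (n : ZMod (2*n)) ∨ y = xa (k - (n : ZMod (2*n))) := by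
  rw [← (isOfFinOrder_of_finite (xa k)).mem_powers_iff_mem_zpowers,
    Submonoid.mem_powers_iff] at h
  obtain ⟨m, hm⟩ := h
  rw [← pow_mod_orderOf, orderOf_xa] at hm
  have h4 : m % 4 < 4 := Nat.mod_lt _ (by norm_num)
  interval_cases (m % 4) <;> simp_all [pow_succ, one_def, sub_eq_add_neg, -a_zero]

lemma a_mem_zpowers_a {n : ℕ} [NeZero n] (j : ZMod (2 * n)) :
    (a j : QuaternionGroup n) ∈ Subgroup.zpowers (a 1) := by
  refine ⟨(j.val : ℤ), ?_⟩
  show (a 1 : QuaternionGroup n) ^ (j.val : ℤ) = a j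
  rw [zpow_natCast, a_one_pow]
  congr 1
  simp [ZMod.natCast_val, ZMod.cast_id]

lemma xa_not_mem_zpowers_a {n : ℕ} [NeZero n] (j k : ZMod (2 * n)) :
    (xa j : QuaternionGroup n) ∉ Subgroup.zpowers (a k) := by
  intro h
  rw [← (isOfFinOrder_of_finite (a k)).mem_powers_iff_mem_zpowers,
    Submonoid.mem_powers_iff] at h
  obtain ⟨m, hm⟩ := h
  have key : ∀ m : ℕ, ∃ i : ZMod (2 * n), (a k : QuaternionGroup n) ^ m = a i := by
    intro m
    induction m with
    | zero => exact ⟨0, rfl⟩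
    | succ m ih => obtain ⟨i, hi⟩ := ih; exact ⟨i + k, by rw [pow_succ, hi, a_mul_a]⟩
  obtain ⟨i, hi⟩ := key m
  rw [hi] at hm
  exact absurd hm (by simp)

end QuaternionGroup

theorem stmt7 (n : ℕ) (hn : 3 ≤ n) (g : QuaternionGroup n) :
    (∀ h : QuaternionGroup n, h ≠ g → (enhancedPowerGraph (QuaternionGroup n)).Adj g h)
      ↔ (g = 1 ∨ g = QuaternionGroup.a (n : ZMod (2 * n))) := by
  haveI : NeZero n := ⟨by omega⟩
  have hcast : ∀ i j : ℕ, i < 2 * n → j < 2 * n → (i : ZMod (2 * n)) = j → i = j := by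
    intro i j hi hj hij
    have := congrArg ZMod.val hij
    rwa [ZMod.val_natCast_of_lt hi, ZMod.val_natCast_of_lt hj] at this
  have h10 : (1 : ZMod (2 * n)) ≠ 0 := by
    intro h
    exact absurd (hcast 1 0 (by omega) (by omega) (by exact_mod_cast h)) (by omega)
  have h1n : (1 : ZMod (2 * n)) ≠ (n : ZMod (2 * n)) := by
    intro h
    exact absurd (hcast 1 n (by omega) (by omega) (by exact_mod_cast h)) (by omega)
  have hn0 : (n : ZMod (2 * n)) ≠ 0 := by
    intro h
    exact absurd (hcast n 0 (by omega) (by omega) (by exact_mod_cast h)) (by omega)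
  have hnneg : (-(n : ℕ) : ZMod (2 * n)) = (n : ZMod (2 * n)) := by
    have : ((2 * n : ℕ) : ZMod (2 * n)) = 0 := ZMod.natCast_self _
    push_cast at this ⊢
    linear_combination -this
  constructor
  · intro hdom
    match g with
    | QuaternionGroup.a i =>
      by_cases hi0 : i = 0
      · left; rw [hi0]; rfl
      right
      by_cases hin : i = (n : ZMod (2 * n))
      · rw [hin]
      exfalso
      have hne : QuaternionGroup.xa 0 ≠ QuaternionGroup.a i := by simp
      obtain ⟨-, c, hgc, hhc⟩ := hdom _ hne
      match c with
      | QuaternionGroup.a k => exact QuaternionGroup.xa_not_mem_zpowers_a 0 k hhc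
      | QuaternionGroup.xa k =>
        rcases QuaternionGroup.mem_zpowers_xa hgc with h | h | h | h
        · exact hi0 (by simpa [QuaternionGroup.one_def, -QuaternionGroup.a_zero] using h)
        · simp at h
        · exact hin (by simpa using h)
        · simp at h
    | QuaternionGroup.xa i =>
      exfalso
      have hne : QuaternionGroup.xa (i + 1) ≠ QuaternionGroup.xa i := by
        simp
        intro h
        exact h10 (by linear_combination h)
      obtain ⟨-, c, hgc, hhc⟩ := hdom _ hne
      match c with
      | QuaternionGroup.a k => exact QuaternionGroup.xa_not_mem_zpowers_a i k hgc
      | QuaternionGroup.xa k =>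
        rcases QuaternionGroup.mem_zpowers_xa hgc with h | h | h | h <;>
          [skip; skip; simp at h; skip] <;>
        · rcases QuaternionGroup.mem_zpowers_xa hhc with h' | h' | h' | h' <;>
            simp [QuaternionGroup.one_def, sub_eq_add_neg, -QuaternionGroup.a_zero] at h h' <;>
          first
          | (exfalso; apply h1n; rw [← hnneg]; linear_combination h' - h)
          | (exfalso; apply h10; linear_combination h' - h)
          | (exfalso; apply h1n; linear_combination h' - h)
  · rintro (rfl | rfl) h hne
    · exact ⟨hne.symm, h, Subgroup.one_mem _, Subgroup.mem_zpowers h⟩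
    · match h with
      | QuaternionGroup.a j =>
        exact ⟨hne.symm, QuaternionGroup.a 1,
          ⟨(n : ℤ), by
            show (QuaternionGroup.a 1 : QuaternionGroup n) ^ (n : ℤ) = _
            rw [zpow_natCast, QuaternionGroup.a_one_pow]⟩,
          QuaternionGroup.a_mem_zpowers_a j⟩
      | QuaternionGroup.xa j =>
        exact ⟨hne.symm, QuaternionGroup.xa j,
          ⟨(2 : ℤ), by
            show (QuaternionGroup.xa j : QuaternionGroup n) ^ (2 : ℤ) = _
            rw [zpow_two, ← sq, QuaternionGroup.xa_sq]⟩,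
          Subgroup.mem_zpowers _⟩
end

section
/- Let p, q be distinct primes and G = El(p^n) × El(q^m). In the enhanced power graph of G, every element of the form (a, e) with a ≠ e is adjacent to every element of the form (e, b) with b ≠ e; moreover the only edges of the enhanced power graph that are not edges of the power graph of G are those between such pairs (a, e) and (e, b). -/
open Polynomial

/- ------- auxiliary lemmas ------- -/

lemma elExp (p n : ℕ) (a : El p n) : a ^ p = 1 := by
  apply Multiplicative.toAdd.injective
  rw [toAdd_pow]
  funext i
  simp [nsmul_eq_mul, ZMod.natCast_self]

lemma elExpZ (p n : ℕ) (a : El p n) : a ^ (p : ℤ) = 1 := by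
  rw [zpow_natCast, elExp]

/-- congruent exponents give equal powers, given an annihilating exponent. -/
lemma zpow_congr {G : Type*} [Group G] (a : G) (N : ℤ) (h1 : a ^ N = 1) {k l : ℤ}
    (h : N ∣ k - l) : a ^ k = a ^ l := by
  obtain ⟨t, ht⟩ := h
  have hk : k = l + N * t := by linarith
  rw [hk, zpow_add, zpow_mul, h1, one_zpow, mul_one]

/-- generator recovered from a power with coprime exponent. -/
lemma gen_mem {G : Type*} [Group G] (c : G) (N : ℕ) (i : ℤ) (hN : c ^ (N : ℤ) = 1)
    (hcop : IsCoprime i (N : ℤ)) : c ∈ Subgroup.zpowers (c ^ i) := by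
  obtain ⟨a, b, hab⟩ := hcop
  refine Subgroup.mem_zpowers_iff.mpr ⟨a, ?_⟩
  calc (c ^ i) ^ a = c ^ (a * i + b * N) := by
        rw [zpow_add, ← zpow_mul, mul_comm i a, mul_comm b (N:ℤ), zpow_mul c (N:ℤ) b, hN,
          one_zpow, mul_one]
  _ = c := by rw [hab, zpow_one]

/-- coprimality of the exponent from nontriviality of a power. -/
lemma cop_of_ne_one {G : Type*} [Group G] {p : ℕ} (hp : p.Prime) (c : G)
    (hc : c ^ (p : ℤ) = 1) (i : ℤ) (h : c ^ i ≠ 1) : IsCoprime i (p : ℤ) := by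
  have hndvd : ¬ (p : ℤ) ∣ i := by
    rintro ⟨t, rfl⟩
    exact h (by rw [zpow_mul, hc, one_zpow])
  rw [Int.isCoprime_iff_gcd_eq_one]
  have hnd : ¬ p ∣ i.natAbs := by rwa [Int.natCast_dvd] at hndvd
  exact Nat.Coprime.symm ((Nat.Prime.coprime_iff_not_dvd hp).mpr hnd)

/-- Powers of an element with trivial second coordinate stay in its cyclic subgroup. -/
lemma side_left {G H : Type*} [Group G] [Group H] {p : ℕ} (hp : p.Prime) (c1 : G)
    (hc1 : c1 ^ (p : ℤ) = 1) (i j : ℤ) (h : c1 ^ i ≠ 1) :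
    ((c1 ^ j, (1 : H)) : G × H) ∈ Subgroup.zpowers ((c1 ^ i, 1) : G × H) := by
  have hcop := cop_of_ne_one hp c1 hc1 i h
  have hmem : c1 ∈ Subgroup.zpowers (c1 ^ i) := gen_mem c1 p i hc1 hcop
  have hj : c1 ^ j ∈ Subgroup.zpowers (c1 ^ i) := Subgroup.zpow_mem _ hmem j
  obtain ⟨k, hk⟩ := Subgroup.mem_zpowers_iff.mp hj
  refine Subgroup.mem_zpowers_iff.mpr ⟨k, ?_⟩
  show ((c1 ^ i) ^ k, (1 : H) ^ k) = _
  rw [hk, one_zpow]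

lemma side_right {G H : Type*} [Group G] [Group H] {p : ℕ} (hp : p.Prime) (c2 : H)
    (hc2 : c2 ^ (p : ℤ) = 1) (i j : ℤ) (h : c2 ^ i ≠ 1) :
    (((1 : G), c2 ^ j) : G × H) ∈ Subgroup.zpowers (((1 : G), c2 ^ i) : G × H) := by
  have hcop := cop_of_ne_one hp c2 hc2 i h
  have hmem : c2 ∈ Subgroup.zpowers (c2 ^ i) := gen_mem c2 p i hc2 hcop
  have hj : c2 ^ j ∈ Subgroup.zpowers (c2 ^ i) := Subgroup.zpow_mem _ hmem j
  obtain ⟨k, hk⟩ := Subgroup.mem_zpowers_iff.mp hj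
  refine Subgroup.mem_zpowers_iff.mpr ⟨k, ?_⟩
  show ((1 : G) ^ k, (c2 ^ i) ^ k) = _
  rw [hk, one_zpow]

theorem stmt11 (p q n m : ℕ) (hp : p.Prime) (hq : q.Prime) (hpq : p ≠ q) :
    (∀ (a : El p n) (b : El q m), a ≠ 1 → b ≠ 1 →
      (enhancedPowerGraph (El p n × El q m)).Adj (a, 1) (1, b)) ∧
    (∀ u v : El p n × El q m,
      (enhancedPowerGraph (El p n × El q m)).Adj u v →
      ¬ (powerGraph (El p n × El q m)).Adj u v →
      ((u.1 ≠ 1 ∧ u.2 = 1 ∧ v.1 = 1 ∧ v.2 ≠ 1) ∨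
       (u.1 = 1 ∧ u.2 ≠ 1 ∧ v.1 ≠ 1 ∧ v.2 = 1))) := by
  have hcoPQ : IsCoprime (p : ℤ) (q : ℤ) := by
    rw [Int.isCoprime_iff_gcd_eq_one, Int.gcd_natCast_natCast]
    exact (Nat.coprime_primes hp hq).mpr hpq
  constructor
  · -- part 1
    intro a b ha hb
    obtain ⟨x, y, hxy⟩ := hcoPQ
    refine ⟨?_, (a, b), ?_, ?_⟩
    · intro h
      exact ha (congrArg Prod.fst h)
    · refine Subgroup.mem_zpowers_iff.mpr ⟨y * q, ?_⟩
      show (a ^ (y * (q:ℤ)), b ^ (y * (q:ℤ))) = (a, 1)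
      have h1 : a ^ (y * (q:ℤ)) = a ^ (1 : ℤ) :=
        zpow_congr a p (elExpZ p n a) ⟨-x, by linarith⟩
      have h2 : b ^ (y * (q:ℤ)) = b ^ (0 : ℤ) :=
        zpow_congr b q (elExpZ q m b) ⟨y, by ring⟩
      rw [h1, h2, zpow_one, zpow_zero]
    · refine Subgroup.mem_zpowers_iff.mpr ⟨x * p, ?_⟩
      show (a ^ (x * (p:ℤ)), b ^ (x * (p:ℤ))) = (1, b)
      have h1 : a ^ (x * (p:ℤ)) = a ^ (0 : ℤ) :=
        zpow_congr a p (elExpZ p n a) ⟨x, by ring⟩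
      have h2 : b ^ (x * (p:ℤ)) = b ^ (1 : ℤ) :=
        zpow_congr b q (elExpZ q m b) ⟨-y, by linarith⟩
      rw [h1, h2, zpow_one, zpow_zero]
  · -- part 2
    rintro ⟨u1, u2⟩ ⟨v1, v2⟩ ⟨hne, ⟨c1, c2⟩, hu, hv⟩ hnp
    obtain ⟨i, hi⟩ := Subgroup.mem_zpowers_iff.mp hu
    obtain ⟨j, hj⟩ := Subgroup.mem_zpowers_iff.mp hv
    have hi1 : c1 ^ i = u1 := congrArg Prod.fst hi
    have hi2 : c2 ^ i = u2 := congrArg Prod.snd hi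
    have hj1 : c1 ^ j = v1 := congrArg Prod.fst hj
    have hj2 : c2 ^ j = v2 := congrArg Prod.snd hj
    have hnp' : ¬ ((u1, u2) ∈ Subgroup.zpowers ((v1, v2) : El p n × El q m) ∨
        ((v1, v2) : El p n × El q m) ∈ Subgroup.zpowers ((u1, u2) : El p n × El q m)) :=
      fun h => hnp ⟨hne, h⟩
    have hcZ : ((c1, c2) : El p n × El q m) ^ ((p : ℤ) * q) = 1 := by
      show (c1 ^ ((p:ℤ)*q), c2 ^ ((p:ℤ)*q)) = (1, 1)
      rw [zpow_mul, elExpZ, one_zpow, mul_comm (p:ℤ) (q:ℤ), zpow_mul, elExpZ, one_zpow]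
    -- both coordinates nontrivial is impossible
    have key : ∀ k : ℤ, c1 ^ k ≠ 1 → c2 ^ k ≠ 1 →
        ((c1, c2) : El p n × El q m) ∈ Subgroup.zpowers (((c1, c2) : El p n × El q m) ^ k) := by
      intro k h1 h2
      have hcop1 := cop_of_ne_one hp c1 (elExpZ p n c1) k h1
      have hcop2 := cop_of_ne_one hq c2 (elExpZ q m c2) k h2
      have hcop : IsCoprime k ((p * q : ℕ) : ℤ) := by
        push_cast
        exact hcop1.mul_right hcop2
      have hcZ' : ((c1, c2) : El p n × El q m) ^ (((p * q : ℕ) : ℤ)) = 1 := by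
        rw [show (((p * q : ℕ)) : ℤ) = (p:ℤ) * q by push_cast; ring]
        exact hcZ
      exact gen_mem _ (p * q) k hcZ' hcop
    have hAu : ¬ (u1 ≠ 1 ∧ u2 ≠ 1) := by
      rintro ⟨h1, h2⟩
      apply hnp'
      right
      have hc := key i (hi1 ▸ h1) (hi2 ▸ h2)
      rw [hi] at hc
      exact hj ▸ Subgroup.zpow_mem _ hc j
    have hAv : ¬ (v1 ≠ 1 ∧ v2 ≠ 1) := by
      rintro ⟨h1, h2⟩
      apply hnp'
      left
      have hc := key j (hj1 ▸ h1) (hj2 ▸ h2)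
      rw [hj] at hc
      exact hi ▸ Subgroup.zpow_mem _ hc i
    have hBu : ¬ (u1 = 1 ∧ u2 = 1) := by
      rintro ⟨h1, h2⟩
      subst h1; subst h2
      exact hnp' (Or.inl (Subgroup.one_mem _))
    have hBv : ¬ (v1 = 1 ∧ v2 = 1) := by
      rintro ⟨h1, h2⟩
      subst h1; subst h2
      exact hnp' (Or.inr (Subgroup.one_mem _))
    have hC : ¬ (u2 = 1 ∧ v2 = 1) := by
      rintro ⟨h1, h2⟩
      subst h1; subst h2
      have hu1 : u1 ≠ 1 := fun h => hBu ⟨h, rfl⟩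
      apply hnp'
      right
      rw [← hi1, ← hj1]
      exact side_left hp c1 (elExpZ p n c1) i j (hi1 ▸ hu1)
    have hD : ¬ (u1 = 1 ∧ v1 = 1) := by
      rintro ⟨h1, h2⟩
      subst h1; subst h2
      have hu2 : u2 ≠ 1 := fun h => hBu ⟨rfl, h⟩
      apply hnp'
      right
      rw [← hi2, ← hj2]
      exact side_right hq c2 (elExpZ q m c2) i j (hi2 ▸ hu2)
    simp only [ne_eq]
    tauto
end

section
/- Let p, q be distinct primes, α = (pⁿ−1)/(p−1), β = (q^m−1)/(q−1). The (α+β+2) × (α+β+2) real matrix T₂ (the quotient matrix of the power graph of El(pⁿ) × El(q^m) described below, with blocks indexed by {1} ∪ [α] ∪ ([α]×[β]) ∪ [β]) has pq − p − q as an eigenvalue with multiplicity at least (α−1)(β−1): for each 1 ≤ i ≤ α−1 and 1 ≤ j ≤ β−1, the vector (0, 0_α, vⁱ ⊗ wʲ, 0_β) is an eigenvector with eigenvalue pq − p − q, where vⁱ ∈ R^α has entries 1 at position i, −1 at position α, 0 elsewhere, and wʲ ∈ R^β similarly; these (α−1)(β−1) vectors are linearly independent. -/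
open Polynomial

/-- Index set for the quotient matrix `T₂`: `{1} ⊕ [α] ⊕ ([α]×[β]) ⊕ [β]`. -/
abbrev T2Idx (α β : ℕ) : Type := Unit ⊕ Fin α ⊕ (Fin α × Fin β) ⊕ Fin β

/-- The quotient matrix `T₂` of the power graph of `El(pⁿ) × El(qᵐ)`. -/
noncomputable def T2mat (p q α β : ℕ) : Matrix (T2Idx α β) (T2Idx α β) ℝ :=
  fun r c => match r, c with
  | .inl _, .inl _ => 0
  | .inl _, .inr (.inl _) => (p : ℝ) - 1
  | .inl _, .inr (.inr (.inl _)) => ((p : ℝ) - 1) * ((q : ℝ) - 1)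
  | .inl _, .inr (.inr (.inr _)) => (q : ℝ) - 1
  | .inr (.inl _), .inl _ => 1
  | .inr (.inl i), .inr (.inl i') => if i = i' then (p : ℝ) - 2 else 0
  | .inr (.inl i), .inr (.inr (.inl i'j)) =>
      if i = i'j.1 then ((p : ℝ) - 1) * ((q : ℝ) - 1) else 0
  | .inr (.inl _), .inr (.inr (.inr _)) => 0
  | .inr (.inr (.inl _)), .inl _ => 1
  | .inr (.inr (.inl ij)), .inr (.inl i') => if ij.1 = i' then (p : ℝ) - 1 else 0
  | .inr (.inr (.inl ij)), .inr (.inr (.inl i'j')) =>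
      if ij = i'j' then ((p : ℝ) - 1) * ((q : ℝ) - 1) - 1 else 0
  | .inr (.inr (.inl ij)), .inr (.inr (.inr j')) => if ij.2 = j' then (q : ℝ) - 1 else 0
  | .inr (.inr (.inr _)), .inl _ => 1
  | .inr (.inr (.inr _)), .inr (.inl _) => 0
  | .inr (.inr (.inr j)), .inr (.inr (.inl i'j')) =>
      if j = i'j'.2 then ((p : ℝ) - 1) * ((q : ℝ) - 1) else 0
  | .inr (.inr (.inr j)), .inr (.inr (.inr j')) => if j = j' then (q : ℝ) - 2 else 0

/-- The vector `vⁱ ∈ ℝ^α`: `1` at position `i`, `-1` at the last position, `0` elsewhere. -/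
noncomputable def vVec (α : ℕ) (i : Fin α) : Fin α → ℝ :=
  fun k => if k = i then 1 else if (k : ℕ) = α - 1 then -1 else 0

/-- The vector `(0, 0_α, vⁱ ⊗ wʲ, 0_β)`. -/
noncomputable def zVec (α β : ℕ) (i : Fin α) (j : Fin β) : T2Idx α β → ℝ :=
  fun r => match r with
  | .inr (.inr (.inl kl)) => vVec α i kl.1 * vVec β j kl.2
  | _ => 0

lemma sum_vVec {α : ℕ} (i : Fin α) (hi : (i : ℕ) + 1 < α) :
    ∑ k, vVec α i k = 0 := by
  have hlt : α - 1 < α := by omega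
  have hiv : (i : ℕ) ≠ α - 1 := by omega
  have h : ∀ k : Fin α, vVec α i k
      = (if k = i then (1 : ℝ) else 0) + (if k = (⟨α - 1, hlt⟩ : Fin α) then (-1 : ℝ) else 0) := by
    intro k
    rcases eq_or_ne k i with h1 | h1
    · subst h1; simp [vVec, Fin.ext_iff, hiv]
    · rcases eq_or_ne (k : ℕ) (α - 1) with h2 | h2
      · simp [vVec, h1, h2, Fin.ext_iff]
      · simp [vVec, h1, h2, Fin.ext_iff]
  simp [h, Finset.sum_add_distrib]

lemma key_sum {α β : ℕ} (f : Fin α → ℝ) (g : Fin β → ℝ) :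
    ∑ kl : Fin α × Fin β, f kl.1 * g kl.2 = (∑ k, f k) * (∑ l, g l) := by
  rw [Finset.sum_mul_sum]
  exact Fintype.sum_prod_type (f := fun kl => f kl.1 * g kl.2)

theorem stmt12 (p q n m α β : ℕ) (hp : p.Prime) (hq : q.Prime) (hpq : p ≠ q)
    (hα : (p - 1) * α = p ^ n - 1) (hβ : (q - 1) * β = q ^ m - 1) :
    (∀ (i : Fin α) (j : Fin β), (i : ℕ) + 1 < α → (j : ℕ) + 1 < β →
      (T2mat p q α β).mulVec (zVec α β i j)
        = ((p : ℝ) * q - p - q) • zVec α β i j) ∧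
    LinearIndependent ℝ
      (fun ij : {i : Fin α // (i : ℕ) + 1 < α} × {j : Fin β // (j : ℕ) + 1 < β} =>
        zVec α β ij.1.1 ij.2.1) := by
  constructor
  · intro i j hi hj
    have hv := sum_vVec i hi
    have hw := sum_vVec j hj
    funext r
    rcases r with _ | (i' | (kl | j'))
    · show ∑ c, T2mat p q α β _ c * zVec α β i j c = _
      simp only [Matrix.mulVec, dotProduct, Fintype.sum_sum_type, T2mat, zVec,
        mul_zero, Finset.sum_const_zero, zero_add, add_zero, Pi.smul_apply, smul_eq_mul]
      calc ∑ kl : Fin α × Fin β, ((p : ℝ) - 1) * ((q : ℝ) - 1) * (vVec α i kl.1 * vVec β j kl.2)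
          = ∑ kl : Fin α × Fin β, (((p : ℝ) - 1) * ((q : ℝ) - 1) * vVec α i kl.1) * vVec β j kl.2 :=
            Finset.sum_congr rfl (by intros; ring)
        _ = 0 := by
            rw [key_sum (fun k => ((p : ℝ) - 1) * ((q : ℝ) - 1) * vVec α i k) (vVec β j), hw,
              mul_zero]
    · show ∑ c, T2mat p q α β _ c * zVec α β i j c = _
      simp only [Matrix.mulVec, dotProduct, Fintype.sum_sum_type, T2mat, zVec,
        mul_zero, Finset.sum_const_zero, zero_add, add_zero, Pi.smul_apply, smul_eq_mul]
      calc ∑ kl : Fin α × Fin β, (if i' = kl.1 then ((p : ℝ) - 1) * ((q : ℝ) - 1) else 0) * (vVec α i kl.1 * vVec β j kl.2)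
          = ∑ kl : Fin α × Fin β, ((if i' = kl.1 then ((p : ℝ) - 1) * ((q : ℝ) - 1) else 0) * vVec α i kl.1) * vVec β j kl.2 :=
            Finset.sum_congr rfl (by intros; ring)
        _ = 0 := by
            rw [key_sum (fun k => (if i' = k then ((p : ℝ) - 1) * ((q : ℝ) - 1) else 0) * vVec α i k)
              (vVec β j), hw, mul_zero]
    · show ∑ c, T2mat p q α β _ c * zVec α β i j c = _
      simp only [Matrix.mulVec, dotProduct, Fintype.sum_sum_type, T2mat, zVec,
        mul_zero, Finset.sum_const_zero, zero_add, add_zero, Pi.smul_apply, smul_eq_mul,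
        ite_mul, zero_mul, Finset.sum_ite_eq, Finset.mem_univ, if_true]
      ring
    · show ∑ c, T2mat p q α β _ c * zVec α β i j c = _
      simp only [Matrix.mulVec, dotProduct, Fintype.sum_sum_type, T2mat, zVec,
        mul_zero, Finset.sum_const_zero, zero_add, add_zero, Pi.smul_apply, smul_eq_mul]
      calc ∑ kl : Fin α × Fin β, (if j' = kl.2 then ((p : ℝ) - 1) * ((q : ℝ) - 1) else 0) * (vVec α i kl.1 * vVec β j kl.2)
          = ∑ kl : Fin α × Fin β, vVec α i kl.1 * ((if j' = kl.2 then ((p : ℝ) - 1) * ((q : ℝ) - 1) else 0) * vVec β j kl.2) :=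
            Finset.sum_congr rfl (by intros; ring)
        _ = 0 := by
            rw [key_sum (vVec α i)
              (fun l => (if j' = l then ((p : ℝ) - 1) * ((q : ℝ) - 1) else 0) * vVec β j l), hv,
              zero_mul]
  · rw [Fintype.linearIndependent_iff]
    intro g hg ij
    have h1 : (ij.1.1 : ℕ) ≠ α - 1 := by have := ij.1.2; omega
    have h2 : (ij.2.1 : ℕ) ≠ β - 1 := by have := ij.2.2; omega
    have hsum := congrFun hg (Sum.inr (Sum.inr (Sum.inl (ij.1.1, ij.2.1))))
    simp only [Finset.sum_apply, Pi.smul_apply, smul_eq_mul, zVec, Pi.zero_apply] at hsum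
    have hterm : ∀ x : {i : Fin α // (i : ℕ) + 1 < α} × {j : Fin β // (j : ℕ) + 1 < β},
        g x * (vVec α x.1.1 ij.1.1 * vVec β x.2.1 ij.2.1) = if x = ij then g ij else 0 := by
      intro x
      rcases eq_or_ne x ij with h | h
      · subst h; simp [vVec, h1, h2]
      · have hx : x.1 ≠ ij.1 ∨ x.2 ≠ ij.2 := by
          by_contra hc; push_neg at hc; exact h (Prod.ext hc.1 hc.2)
        rcases hx with hx | hx
        · have hne : ij.1.1 ≠ x.1.1 := fun he => hx (Subtype.ext he.symm)
          simp [vVec, hne, h1, h]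
        · have hne : ij.2.1 ≠ x.2.1 := fun he => hx (Subtype.ext he.symm)
          simp [vVec, hne, h2, h]
    simp only [hterm, Finset.sum_ite_eq', Finset.mem_univ, if_true] at hsum
    exact hsum
end
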